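/- For fixed r ≥ 2, the divided-difference function D_r(x,y) = (x^r - y^r)/(x - y) (extended by D_r(x,x) = r x^{r-1}) is Schur convex on (0,∞) × (0,∞); that is, if a ≥ b > 0, c ≥ d > 0, c ≤ a, and a + b = c + d, then D_r(c,d) ≤ D_r(a,b). -/

import Mathlib

open Set Real

noncomputable def D (r x y : ℝ) : ℝ :=
  if x = y then r * x ^ (r - 1) else (x ^ r - y ^ r) / (x - y)

lemma tangent_line {q x t : ℝ} (hq : 1 ≤ q) (hx : 0 < x) (ht : 0 ≤ t) :
    x ^ q + q * x ^ (q - 1) * (t - x) ≤ t ^ q := by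
  have hs : -1 ≤ t / x - 1 := by
    have : 0 ≤ t / x := div_nonneg ht hx.le
    linarith
  have h := one_add_mul_self_le_rpow_one_add hs hq
  have h1 : 1 + (t / x - 1) = t / x := by ring
  rw [h1, Real.div_rpow ht hx.le] at h
  have hxq : 0 < x ^ q := Real.rpow_pos_of_pos hx q
  have key := mul_le_mul_of_nonneg_left h hxq.le
  have e1 : x ^ q * (t ^ q / x ^ q) = t ^ q := by field_simp
  have e2 : x ^ q * (1 + q * (t / x - 1)) = x ^ q + q * x ^ (q - 1) * (t - x) := by
    rw [Real.rpow_sub_one hx.ne']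
    field_simp
  rw [e1, e2] at key
  exact key

lemma trap {r x y : ℝ} (hr : 2 ≤ r) (hy : 0 < y) (hxy : y ≤ x) :
    x ^ r - y ^ r ≤ (x - y) * (r / 2) * (x ^ (r - 1) + y ^ (r - 1)) := by
  set F : ℝ → ℝ := fun t => (t - y) * (r / 2) * (t ^ (r - 1) + y ^ (r - 1)) - (t ^ r - y ^ r)
    with hF
  have hder : ∀ t ∈ Ici y, HasDerivAt F
      (1 * (r / 2) * (t ^ (r - 1) + y ^ (r - 1)) +
        (t - y) * (r / 2) * ((r - 1) * t ^ (r - 1 - 1)) - r * t ^ (r - 1)) t := by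
    intro t ht
    have htpos : 0 < t := lt_of_lt_of_le hy ht
    have h1 : HasDerivAt (fun t : ℝ => t ^ (r - 1)) ((r - 1) * t ^ (r - 1 - 1)) t :=
      Real.hasDerivAt_rpow_const (Or.inl htpos.ne')
    have h2 := h1.add_const (y ^ (r - 1))
    have h3 : HasDerivAt (fun t : ℝ => (t - y) * (r / 2)) (1 * (r / 2)) t :=
      ((hasDerivAt_id t).sub_const y).mul_const _
    have h4 := h3.mul h2
    have h5 : HasDerivAt (fun t : ℝ => t ^ r) (r * t ^ (r - 1)) t :=
      Real.hasDerivAt_rpow_const (Or.inl htpos.ne')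
    have h6 := h4.sub (h5.sub_const (y ^ r))
    exact h6
  have hmono : MonotoneOn F (Ici y) := by
    apply monotoneOn_of_deriv_nonneg (convex_Ici y)
    · exact fun t ht => (hder t ht).continuousAt.continuousWithinAt
    · exact fun t ht => ((hder t (interior_subset ht)).differentiableAt).differentiableWithinAt
    · intro t ht
      rw [interior_Ici] at ht
      have htpos : 0 < t := lt_trans hy ht
      rw [(hder t (mem_Ici.mpr (le_of_lt ht))).deriv]
      have htan := tangent_line (q := r - 1) (x := t) (t := y) (by linarith) htpos hy.le
      have hrpos : (0:ℝ) < r := by linarith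
      have h7 : 0 ≤ t - y := by linarith [(mem_Ioi.mp ht).le]
      nlinarith [htan, hrpos, h7]
  have h0 : F y = 0 := by simp [hF]
  have := hmono (self_mem_Ici) hxy hxy
  rw [h0] at this
  simp only [hF] at this
  linarith

lemma spread {p m u v : ℝ} (hp : 1 ≤ p) (hv : 0 ≤ v) (hvu : v ≤ u) (hum : u ≤ m) :
    (m + v) ^ p + (m - v) ^ p ≤ (m + u) ^ p + (m - u) ^ p := by
  rcases eq_or_lt_of_le hvu with rfl | hlt
  · exact le_rfl
  · have hu : 0 < u := lt_of_le_of_lt hv hlt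
    have hmu : (0:ℝ) ≤ m - u := by linarith
    have hpu : (0:ℝ) ≤ m + u := by linarith
    have hcv := (convexOn_rpow hp).2
    have ht1 : (0:ℝ) ≤ (u + v) / (2 * u) := by positivity
    have ht2 : (0:ℝ) ≤ (u - v) / (2 * u) := by
      apply div_nonneg (by linarith) (by linarith)
    have hsum1 : (u + v) / (2 * u) + (u - v) / (2 * u) = 1 := by
      field_simp; ring
    have h1 := hcv (mem_Ici.2 hpu) (mem_Ici.2 hmu) ht1 ht2 hsum1
    have hsum2 : (u - v) / (2 * u) + (u + v) / (2 * u) = 1 := by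
      field_simp; ring
    have h2 := hcv (mem_Ici.2 hpu) (mem_Ici.2 hmu) ht2 ht1 hsum2
    simp only [smul_eq_mul] at h1 h2
    have e1 : (u + v) / (2 * u) * (m + u) + (u - v) / (2 * u) * (m - u) = m + v := by
      field_simp; ring
    have e2 : (u - v) / (2 * u) * (m + u) + (u + v) / (2 * u) * (m - u) = m - v := by
      field_simp; ring
    rw [e1] at h1
    rw [e2] at h2
    have := add_le_add h1 h2
    calc (m + v) ^ p + (m - v) ^ p ≤ _ := this
      _ = (m + u) ^ p + (m - u) ^ p := by
          field_simp
          ring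

lemma mid {r b a : ℝ} (hr : 2 ≤ r) (hb : 0 < b) (hba : b ≤ a) :
    r * ((a + b) / 2) ^ (r - 1) * (a - b) ≤ a ^ r - b ^ r := by
  set F : ℝ → ℝ := fun t => t ^ r - b ^ r - r * ((t + b) / 2) ^ (r - 1) * (t - b) with hF
  have hder : ∀ t ∈ Ici b, HasDerivAt F
      (r * t ^ (r - 1) -
        (r * (1 / 2 * (r - 1) * ((t + b) / 2) ^ (r - 1 - 1)) * (t - b) +
          r * ((t + b) / 2) ^ (r - 1) * 1)) t := by
    intro t ht
    have htpos : 0 < t := lt_of_lt_of_le hb ht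
    have hmpos : 0 < (t + b) / 2 := by rw [mem_Ici] at ht; positivity
    have h1 : HasDerivAt (fun t : ℝ => (t + b) / 2) (1 / 2) t := by
      simpa using ((hasDerivAt_id t).add_const b).div_const 2
    have h2 : HasDerivAt (fun t : ℝ => ((t + b) / 2) ^ (r - 1))
        (1 / 2 * (r - 1) * ((t + b) / 2) ^ (r - 1 - 1)) t :=
      h1.rpow_const (Or.inl hmpos.ne')
    have h3 := (h2.const_mul r).mul ((hasDerivAt_id t).sub_const b)
    have h4 : HasDerivAt (fun t : ℝ => t ^ r) (r * t ^ (r - 1)) t :=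
      Real.hasDerivAt_rpow_const (Or.inl htpos.ne')
    have h5 := (h4.sub_const (b ^ r)).sub h3
    exact h5
  have hmono : MonotoneOn F (Ici b) := by
    apply monotoneOn_of_deriv_nonneg (convex_Ici b)
    · exact fun t ht => (hder t ht).continuousAt.continuousWithinAt
    · exact fun t ht => ((hder t (interior_subset ht)).differentiableAt).differentiableWithinAt
    · intro t ht
      rw [interior_Ici] at ht
      have htpos : 0 < t := lt_trans hb ht
      have hmpos : 0 < (t + b) / 2 := by positivity
      rw [(hder t (mem_Ici.mpr ht.le)).deriv]
      have htan := tangent_line (q := r - 1) (x := (t + b) / 2) (t := t)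
        (by linarith) hmpos htpos.le
      have hrpos : (0:ℝ) < r := by linarith
      nlinarith [htan, hrpos]
  have h0 : F b = 0 := by simp [hF]
  have := hmono self_mem_Ici hba hba
  rw [h0] at this
  simp only [hF] at this
  linarith

lemma cross {r m u v : ℝ} (hr : 2 ≤ r) (hv : 0 < v) (hvu : v ≤ u) (hum : u < m) :
    u * ((m + v) ^ r - (m - v) ^ r) ≤ v * ((m + u) ^ r - (m - u) ^ r) := by
  set H : ℝ → ℝ := fun w => v * ((m + w) ^ r - (m - w) ^ r) -
      w * ((m + v) ^ r - (m - v) ^ r) with hH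
  have hder : ∀ w ∈ Icc v u, HasDerivAt H
      (v * (1 * r * (m + w) ^ (r - 1) - -1 * r * (m - w) ^ (r - 1)) -
        1 * ((m + v) ^ r - (m - v) ^ r)) w := by
    intro w hw
    obtain ⟨hw1, hw2⟩ := hw
    have hp1 : 0 < m + w := by linarith
    have hp2 : 0 < m - w := by linarith
    have hA : HasDerivAt (fun w : ℝ => (m + w) ^ r) (1 * r * (m + w) ^ (r - 1)) w :=
      (((hasDerivAt_id w).const_add m).rpow_const (Or.inl hp1.ne'))
    have hB : HasDerivAt (fun w : ℝ => (m - w) ^ r) (-1 * r * (m - w) ^ (r - 1)) w :=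
      (((hasDerivAt_id w).const_sub m).rpow_const (Or.inl hp2.ne'))
    have h1 := (hA.sub hB).const_mul v
    have h2 := (hasDerivAt_id w).mul_const ((m + v) ^ r - (m - v) ^ r)
    exact h1.sub h2
  have hmono : MonotoneOn H (Icc v u) := by
    apply monotoneOn_of_deriv_nonneg (convex_Icc v u)
    · exact fun w hw => (hder w hw).continuousAt.continuousWithinAt
    · exact fun w hw => ((hder w (interior_subset hw)).differentiableAt).differentiableWithinAt
    · intro w hw
      rw [interior_Icc] at hw
      obtain ⟨hw1, hw2⟩ := hw
      rw [(hder w ⟨hw1.le, hw2.le⟩).deriv]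
      have htrap := trap (x := m + v) (y := m - v) hr (by linarith) (by linarith)
      have hspread := spread (p := r - 1) (m := m) (u := w) (v := v)
        (by linarith) hv.le hw1.le (by linarith)
      have : (m + v) ^ r - (m - v) ^ r ≤ v * r * ((m + w) ^ (r - 1) + (m - w) ^ (r - 1)) := by
        calc (m + v) ^ r - (m - v) ^ r
            ≤ (m + v - (m - v)) * (r / 2) * ((m + v) ^ (r - 1) + (m - v) ^ (r - 1)) := htrap
          _ = v * r * ((m + v) ^ (r - 1) + (m - v) ^ (r - 1)) := by ring
          _ ≤ v * r * ((m + w) ^ (r - 1) + (m - w) ^ (r - 1)) := by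
              apply mul_le_mul_of_nonneg_left hspread
              positivity
      nlinarith [this]
  have h0 : H v = 0 := by simp [hH]
  have := hmono (left_mem_Icc.2 hvu) (right_mem_Icc.2 hvu) hvu
  rw [h0] at this
  simp only [hH] at this
  linarith

theorem stmt_2 (r a b c d : ℝ) (hr : 2 ≤ r)
    (hb : 0 < b) (hd : 0 < d) (hab : b ≤ a) (hcd : d ≤ c) (hca : c ≤ a)
    (hsum : a + b = c + d) : D r c d ≤ D r a b := by
  by_cases hab' : a = b
  · have hac : a ≤ c := by linarith
    have hc : c = a := le_antisymm hca hac
    have hd2 : d = a := by linarith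
    rw [hc, hd2, hab']
  · have hba : b < a := lt_of_le_of_ne hab (fun h => hab' h.symm)
    have hDab : D r a b = (a ^ r - b ^ r) / (a - b) := if_neg hab'
    by_cases hcd' : c = d
    · have hDcd : D r c d = r * c ^ (r - 1) := if_pos hcd'
      rw [hDab, hDcd]
      rw [le_div_iff₀ (by linarith : (0:ℝ) < a - b)]
      have hcm : c = (a + b) / 2 := by linarith
      rw [hcm]
      exact mid hr hb hab
    · have hdc : d < c := lt_of_le_of_ne hcd (fun h => hcd' h.symm)
      have hDcd : D r c d = (c ^ r - d ^ r) / (c - d) := if_neg hcd'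
      rw [hDab, hDcd]
      rw [div_le_div_iff₀ (by linarith) (by linarith)]
      have key := cross (r := r) (m := (a + b) / 2) (u := (a - b) / 2) (v := (c - d) / 2)
        hr (by linarith) (by linarith) (by linarith)
      have e1 : (a + b) / 2 + (a - b) / 2 = a := by ring
      have e2 : (a + b) / 2 - (a - b) / 2 = b := by ring
      have e3 : (a + b) / 2 + (c - d) / 2 = c := by linarith
      have e4 : (a + b) / 2 - (c - d) / 2 = d := by linarith
      rw [e1, e2, e3, e4] at key
      linarith [key]
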